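/- arXiv:1106.3931 — 2 statements merged into one kernel-verified Lean document; each statement's English description precedes it below -/
import Mathlib

section
/- Let λ ∈ ℂ with Re λ < 0, and let η, k, ν > 0 satisfy (|k+λ|² − ηkν)·Re λ − ην·Re(λ²) > 0. Then Re[λ·(1 − ην/(k+λ))⁻¹] > 0, provided k + λ − ην ≠ 0. -/
theorem stmt0 (lam : ℂ) (η k ν : ℝ) (hlam : lam.re < 0)
    (hη : 0 < η) (hk : 0 < k) (hν : 0 < ν)
    (h28 : (‖(k : ℂ) + lam‖ ^ 2 - η * k * ν) * lam.re
        - η * ν * (lam ^ 2).re > 0)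
    (hne : (k : ℂ) + lam - (η : ℂ) * (ν : ℂ) ≠ 0) :
    0 < (lam * (1 - (η : ℂ) * (ν : ℂ) / ((k : ℂ) + lam))⁻¹).re := by
  have hw : (k : ℂ) + lam ≠ 0 := by
    intro h
    have hl : lam = -(k : ℂ) := by linear_combination h
    rw [hl] at h28
    simp [Complex.sq_norm, Complex.normSq_apply, ← Complex.ofReal_pow] at h28
    nlinarith [h28]
  have hE : lam * (1 - (η : ℂ) * (ν : ℂ) / ((k : ℂ) + lam))⁻¹
      = lam * ((k : ℂ) + lam) / ((k : ℂ) + lam - (η : ℂ) * (ν : ℂ)) := by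
    field_simp
  rw [hE, Complex.div_re]
  have hsq : 0 < Complex.normSq ((k : ℂ) + lam - (η : ℂ) * (ν : ℂ)) :=
    Complex.normSq_pos.mpr hne
  rw [← add_div]
  apply div_pos _ hsq
  have habs : ‖(k : ℂ) + lam‖ ^ 2
      = (k + lam.re) ^ 2 + lam.im ^ 2 := by
    rw [Complex.sq_norm, Complex.normSq_apply]
    simp
    ring
  have hre2 : (lam ^ 2).re = lam.re ^ 2 - lam.im ^ 2 := by
    simp [pow_two, Complex.mul_re]
  rw [habs, hre2] at h28
  simp [Complex.mul_re, Complex.mul_im, Complex.add_re, Complex.add_im,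
    Complex.sub_re, Complex.sub_im, Complex.ofReal_re, Complex.ofReal_im] at h28 ⊢
  nlinarith [h28]
end

section
/- Let ν > 0, k ∈ ℤ \ {0}, λ ∈ ℂ with Re λ ≤ 0, U : [0,1] → ℝ continuous, and let W : [0,1] → ℂ be twice continuously differentiable with W(0) = W(1) = 0 and −ν W''(y) + (νk² + ikU(y) − λ) W(y) = 0 for all y ∈ [0,1]. Then W ≡ 0. -/
theorem stmt9 (ν : ℝ) (hν : 0 < ν) (k : ℤ) (hk : k ≠ 0)
    (lam : ℂ) (hlam : lam.re ≤ 0)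
    (U : ℝ → ℝ) (hU : ContinuousOn U (Set.Icc 0 1))
    (W : ℝ → ℂ) (hW : ContDiffOn ℝ 2 W (Set.Icc 0 1))
    (hb0 : W 0 = 0) (hb1 : W 1 = 0)
    (hode : ∀ y ∈ Set.Icc (0 : ℝ) 1,
      -(ν : ℂ) * iteratedDerivWithin 2 W (Set.Icc 0 1) y
        + ((ν : ℂ) * (k : ℂ) ^ 2 + Complex.I * (k : ℂ) * (U y : ℂ) - lam) * W y
        = 0) :
    ∀ y ∈ Set.Icc (0 : ℝ) 1, W y = 0 := by
  intro y hy
  set f : ℝ → ℝ := fun t => (W t).re * (W t).re + (W t).im * (W t).im with hfdef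
  have hWopen : ContDiffOn ℝ 2 W (Set.Ioo (0:ℝ) 1) := hW.mono Set.Ioo_subset_Icc_self
  have hW1 : ContDiffOn ℝ 1 (deriv W) (Set.Ioo (0:ℝ) 1) :=
    hWopen.deriv_of_isOpen isOpen_Ioo (by norm_num)
  have hWdiff : ∀ x ∈ Set.Ioo (0:ℝ) 1, HasDerivAt W (deriv W x) x := by
    intro x hx
    exact ((hWopen.differentiableOn (by norm_num)).differentiableAt
      (isOpen_Ioo.mem_nhds hx)).hasDerivAt
  have hW'diff : ∀ x ∈ Set.Ioo (0:ℝ) 1, HasDerivAt (deriv W) (deriv (deriv W) x) x := by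
    intro x hx
    exact ((hW1.differentiableOn one_ne_zero).differentiableAt
      (isOpen_Ioo.mem_nhds hx)).hasDerivAt
  have hre : ∀ (F : ℝ → ℂ) (F' : ℂ) (x : ℝ), HasDerivAt F F' x →
      HasDerivAt (fun t => (F t).re) F'.re x := by
    intro F F' x h
    exact (Complex.reCLM.hasFDerivAt.comp_hasDerivAt x h)
  have him : ∀ (F : ℝ → ℂ) (F' : ℂ) (x : ℝ), HasDerivAt F F' x →
      HasDerivAt (fun t => (F t).im) F'.im x := by
    intro F F' x h
    exact (Complex.imCLM.hasFDerivAt.comp_hasDerivAt x h)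
  set g : ℝ → ℝ := fun t =>
    ((deriv W t).re * (W t).re + (W t).re * (deriv W t).re)
    + ((deriv W t).im * (W t).im + (W t).im * (deriv W t).im) with hgdef
  have hfg : ∀ x ∈ Set.Ioo (0:ℝ) 1, HasDerivAt f (g x) x := by
    intro x hx
    have h1 := hre W (deriv W x) x (hWdiff x hx)
    have h2 := him W (deriv W x) x (hWdiff x hx)
    exact ((h1.mul h1).add (h2.mul h2))
  have hderivf : Set.EqOn (deriv f) g (Set.Ioo (0:ℝ) 1) := fun x hx => (hfg x hx).deriv
  have hg' : ∀ x ∈ Set.Ioo (0:ℝ) 1, HasDerivAt g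
      (2 * ((deriv W x).re * (deriv W x).re + (deriv W x).im * (deriv W x).im)
       + 2 * ((W x).re * (deriv (deriv W) x).re + (W x).im * (deriv (deriv W) x).im)) x := by
    intro x hx
    have h1 := hre W (deriv W x) x (hWdiff x hx)
    have h2 := him W (deriv W x) x (hWdiff x hx)
    have h3 := hre (deriv W) (deriv (deriv W) x) x (hW'diff x hx)
    have h4 := him (deriv W) (deriv (deriv W) x) x (hW'diff x hx)
    have := ((h3.mul h1).add (h1.mul h3)).add ((h4.mul h2).add (h2.mul h4))
    convert this using 1
    all_goals first | rfl | ring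
  -- key nonnegativity from the ODE
  have hkey : ∀ x ∈ Set.Ioo (0:ℝ) 1,
      0 ≤ (W x).re * (deriv (deriv W) x).re + (W x).im * (deriv (deriv W) x).im := by
    intro x hx
    have hxI : x ∈ Set.Icc (0:ℝ) 1 := Set.Ioo_subset_Icc_self hx
    have h1 : Set.Icc (0:ℝ) 1 ∩ Set.Ioo 0 1 = Set.Ioo 0 1 :=
      Set.inter_eq_self_of_subset_right Set.Ioo_subset_Icc_self
    have heq : iteratedDerivWithin 2 W (Set.Icc 0 1) x = deriv (deriv W) x := by
      rw [iteratedDerivWithin_eq_iteratedFDerivWithin,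
        ← iteratedFDerivWithin_inter_open (s := Set.Icc (0:ℝ) 1) isOpen_Ioo hx, h1,
        iteratedFDerivWithin_of_isOpen 2 isOpen_Ioo hx,
        ← iteratedDeriv_eq_iteratedFDeriv, iteratedDeriv_succ, iteratedDeriv_one]
    have hODE := hode x hxI
    rw [heq] at hODE
    set c : ℂ := (ν : ℂ) * (k : ℂ) ^ 2 + Complex.I * (k : ℂ) * (U x : ℂ) - lam with hc
    have hν' : (ν : ℂ) ≠ 0 := by exact_mod_cast hν.ne'
    have hW2 : deriv (deriv W) x = c / (ν:ℂ) * W x := by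
      field_simp
      linear_combination -hODE
    have hrecompute : (W x).re * (deriv (deriv W) x).re + (W x).im * (deriv (deriv W) x).im
        = ((starRingEnd ℂ) (W x) * deriv (deriv W) x).re := by
      simp [Complex.mul_re]
    rw [hrecompute, hW2]
    have h2 : (starRingEnd ℂ) (W x) * (c / (ν:ℂ) * W x)
        = c / (ν:ℂ) * (W x * (starRingEnd ℂ) (W x)) := by ring
    rw [h2, Complex.mul_conj]
    have hcre : (c / (ν:ℂ)).re = (ν * (k:ℝ)^2 - lam.re) / ν := by
      rw [hc]
      rw [Complex.div_re]
      simp [Complex.normSq_ofReal]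
      field_simp
      rw [show ((k:ℂ)^2) = (((k^2 : ℤ)) : ℂ) by push_cast; ring, Complex.intCast_re]
      push_cast
      ring
    have hre2 : (c / (ν:ℂ) * (Complex.normSq (W x) : ℂ)).re
        = (c / (ν:ℂ)).re * Complex.normSq (W x) := by
      simp [Complex.mul_re]
    rw [hre2, hcre]
    apply mul_nonneg
    · apply div_nonneg _ hν.le
      have : (0:ℝ) ≤ ν * (k:ℝ)^2 := mul_nonneg hν.le (sq_nonneg _)
      linarith
    · exact Complex.normSq_nonneg _
  -- convexity of f
  have hconv : ConvexOn ℝ (Set.Icc (0:ℝ) 1) f := by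
    apply convexOn_of_deriv2_nonneg (convex_Icc 0 1)
    · have hc := hW.continuousOn
      exact ((Complex.continuous_re.comp_continuousOn hc).mul
        (Complex.continuous_re.comp_continuousOn hc)).add
        ((Complex.continuous_im.comp_continuousOn hc).mul
        (Complex.continuous_im.comp_continuousOn hc))
    · rw [interior_Icc]
      exact fun x hx => (hfg x hx).differentiableAt.differentiableWithinAt
    · rw [interior_Icc]
      rw [differentiableOn_congr hderivf]
      exact fun x hx => (hg' x hx).differentiableAt.differentiableWithinAt
    · rw [interior_Icc]
      intro x hx
      have hEq : deriv f =ᶠ[nhds x] g :=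
        Filter.eventuallyEq_of_mem (isOpen_Ioo.mem_nhds hx) hderivf
      have : deriv (deriv f) x = deriv g x := hEq.deriv_eq
      show 0 ≤ deriv (deriv f) x
      rw [this, (hg' x hx).deriv]
      have h5 := hkey x hx
      have h6 : (0:ℝ) ≤ (deriv W x).re * (deriv W x).re + (deriv W x).im * (deriv W x).im := by
        nlinarith [sq_nonneg (deriv W x).re, sq_nonneg (deriv W x).im]
      linarith
  -- conclude
  obtain ⟨hy0, hy1⟩ := hy
  have h0 : f 0 = 0 := by simp [hfdef, hb0]
  have h1 : f 1 = 0 := by simp [hfdef, hb1]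
  have hle : f y ≤ 0 := by
    have := hconv.2 (Set.left_mem_Icc.2 zero_le_one) (Set.right_mem_Icc.2 zero_le_one)
      (by linarith : (0:ℝ) ≤ 1 - y) hy0 (by ring : (1 - y) + y = 1)
    simp only [smul_eq_mul, mul_zero, mul_one, h0, h1] at this
    simpa using this
  have hge : 0 ≤ f y := by
    show (0:ℝ) ≤ (W y).re * (W y).re + (W y).im * (W y).im
    nlinarith [mul_self_nonneg (W y).re, mul_self_nonneg (W y).im]
  have hfy : (W y).re * (W y).re + (W y).im * (W y).im = 0 := le_antisymm hle hge
  have hre0 : (W y).re * (W y).re = 0 := by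
    nlinarith [mul_self_nonneg (W y).re, mul_self_nonneg (W y).im]
  have him0 : (W y).im * (W y).im = 0 := by
    nlinarith [mul_self_nonneg (W y).re, mul_self_nonneg (W y).im]
  exact Complex.ext (mul_self_eq_zero.1 hre0) (mul_self_eq_zero.1 him0)
end
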